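/- arXiv:math/0110234 — 2 statements merged into one kernel-verified Lean document; each statement's English description precedes it below -/
import Mathlib

section
/- Let G be a finite group, T ≤ G a cyclic subgroup with |N_G(T) : T| = 2n, and suppose a distinguished subset S ⊆ T of 'good' elements has size at least ((r-1)/(2r))·|T| with r ≥ 5, such that every element of S lies in no conjugate of T other than T itself. Then the union of the G-conjugates of S has cardinality at least |G|/(5n). -/
open Pointwise

lemma mem_conj_smul_iff {G : Type*} [Group G] (T : Subgroup G) (g x : G) :
    x ∈ (MulAut.conj g • T : Subgroup G) ↔ g⁻¹ * x * g ∈ T := by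
  rw [Subgroup.mem_pointwise_smul_iff_inv_smul_mem]
  simp [MulAut.smul_def, mul_assoc]

lemma conj_smul_eq_of_mem_normalizer {G : Type*} [Group G] (T : Subgroup G) (g : G)
    (hg : g ∈ Subgroup.normalizer (T : Set G)) : (MulAut.conj g • T : Subgroup G) = T := by
  ext x
  rw [mem_conj_smul_iff, Subgroup.mem_normalizer_iff] at *
  rw [hg (g⁻¹ * x * g)]
  group

lemma mem_normalizer_of_conj_smul_eq {G : Type*} [Group G] (T : Subgroup G) (g : G)
    (hg : (MulAut.conj g • T : Subgroup G) = T) : g ∈ Subgroup.normalizer (T : Set G) := by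
  rw [Subgroup.mem_normalizer_iff]
  intro h
  constructor
  · intro hh
    rw [← hg, mem_conj_smul_iff]
    group
    simpa using hh
  · intro hh
    rw [← hg, mem_conj_smul_iff] at hh
    convert hh using 2 <;> group

open Pointwise in
theorem stmt8 (G : Type*) [Group G] [Fintype G] (T : Subgroup G) [IsCyclic T]
    (n r : ℕ) (hn : 1 ≤ n) (hr : 5 ≤ r)
    (hindex : (T.subgroupOf (Subgroup.normalizer (T : Set G))).index = 2 * n)
    (S : Set G) (hST : S ⊆ (T : Set G))
    (hSsize : (r - 1) * Nat.card T ≤ S.ncard * (2 * r))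
    (hunique : ∀ g : G, ∀ s ∈ S, s ∈ (MulAut.conj g • T : Subgroup G) →
        (MulAut.conj g • T : Subgroup G) = T) :
    Fintype.card G ≤ (⋃ g : G, (fun x => g * x * g⁻¹) '' S).ncard * (5 * n) := by
  classical
  set N := Subgroup.normalizer (T : Set G)
  set U : Set G := ⋃ g : G, (fun x => g * x * g⁻¹) '' S with hU
  -- injection from (G ⧸ N) × S into U
  have key : N.index * S.ncard ≤ U.ncard := by
    let f : (G ⧸ N) × S → U := fun p =>
      ⟨p.1.out * p.2.1 * p.1.out⁻¹,
        Set.mem_iUnion.2 ⟨p.1.out, Set.mem_image_of_mem _ p.2.2⟩⟩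
    have hf : Function.Injective f := by
      rintro ⟨q, s, hs⟩ ⟨q', s', hs'⟩ h
      simp only [f, Subtype.mk.injEq] at h
      set a := q.out
      set b := q'.out
      have hsconj : s ∈ (MulAut.conj (a⁻¹ * b) • T : Subgroup G) := by
        rw [mem_conj_smul_iff]
        have : b⁻¹ * a * s * a⁻¹ * b ∈ T := by
          have : b⁻¹ * (a * s * a⁻¹) * b = s' := by
            rw [h]; group
          have h2 : b⁻¹ * a * s * a⁻¹ * b = s' := by rw [← this]; group
          rw [h2]; exact hST hs'
        convert this using 1; group
      have hmem : a⁻¹ * b ∈ N := mem_normalizer_of_conj_smul_eq T _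
        (hunique _ s hs hsconj)
      have hqq : q = q' := by
        rw [← QuotientGroup.out_eq' q, ← QuotientGroup.out_eq' q', QuotientGroup.eq]
        exact hmem
      subst hqq
      have hss : s = s' := mul_left_cancel (mul_right_cancel h)
      simp [hss]
    have hcard := Nat.card_le_card_of_injective f hf
    rw [Nat.card_prod] at hcard
    rw [Nat.card_coe_set_eq, Nat.card_coe_set_eq] at hcard
    exact le_of_eq_of_le (by rw [Subgroup.index]) hcard
  -- card G = N.index * card N, card N = 2n * card T
  have hNcard : Nat.card N = 2 * n * Nat.card T := by
    have h1 : (T.subgroupOf N).index * Nat.card (T.subgroupOf N) = Nat.card N :=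
      Subgroup.index_mul_card _
    have h2 : Nat.card (T.subgroupOf N) = Nat.card T :=
      Nat.card_congr (Subgroup.subgroupOfEquivOfLe (Subgroup.le_normalizer)).toEquiv
    rw [hindex, h2] at h1
    omega
  have hG : Fintype.card G = N.index * (2 * n * Nat.card T) := by
    rw [← hNcard, ← Nat.card_eq_fintype_card, ← Subgroup.index_mul_card N]
  rw [hG]
  -- reduce to 2 * card T ≤ 5 * S.ncard
  have hTS : 2 * Nat.card T ≤ 5 * S.ncard := by
    obtain ⟨k, rfl⟩ : ∃ k, r = k + 5 := ⟨r - 5, by omega⟩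
    have : (k + 5 - 1) = k + 4 := by omega
    rw [this] at hSsize
    nlinarith
  calc N.index * (2 * n * Nat.card T) = (N.index * (2 * Nat.card T)) * n := by ring
    _ ≤ (N.index * (5 * S.ncard)) * n := by
        exact Nat.mul_le_mul_right n (Nat.mul_le_mul_left _ hTS)
    _ = (N.index * S.ncard) * (5 * n) := by ring
    _ ≤ U.ncard * (5 * n) := Nat.mul_le_mul_right _ key
end

section
/- Let V be a vector space of dimension 2n+1 over F_q (q odd) and let i, j ∈ GL(V) be involutions whose (-1)-eigenspaces have dimension 2n. Then ij fixes pointwise a subspace of codimension at most 2, and consequently the order of ij divides q(q+1) or q(q-1). -/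
open Polynomial

lemma aux_rev {F R : Type*} [Field F] [Ring R] [Algebra F R] (y : Rˣ) (p : F[X]) :
    aeval (y : R) p.reverse = aeval ((y⁻¹ : Rˣ) : R) p * (y : R) ^ p.natDegree := by
  set d := p.natDegree with hd
  have h1 : p.reverse.natDegree < d + 1 := by
    have := p.reverse_natDegree
    omega
  have key : ∀ k ∈ Finset.range (d + 1),
      p.reverse.coeff k • (y : R) ^ k
        = (fun j => p.coeff j • ((y⁻¹ : Rˣ) : R) ^ j * (y : R) ^ d) (d + 1 - 1 - k) := by
    intro k hk
    rw [Finset.mem_range] at hk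
    have hk' : k ≤ d := by omega
    simp only []
    have e1 : d + 1 - 1 - k = d - k := by omega
    rw [e1, coeff_reverse, revAt_le hk', smul_mul_assoc]
    congr 1
    have hu : (y⁻¹ : Rˣ) ^ (d - k) * y ^ d = y ^ k := by
      have h2 : y ^ (d - k) * y ^ k = y ^ d := by
        rw [← pow_add]; congr 1; omega
      rw [← h2, ← mul_assoc, inv_pow, inv_mul_cancel, one_mul]
    calc (y : R) ^ k = ((y ^ k : Rˣ) : R) := by push_cast; ring
      _ = (((y⁻¹ : Rˣ) ^ (d - k) * y ^ d : Rˣ) : R) := by rw [hu]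
      _ = ((y⁻¹ : Rˣ) : R) ^ (d - k) * (y : R) ^ d := by push_cast; ring
  calc aeval (y : R) p.reverse
      = ∑ k ∈ Finset.range (d + 1), p.reverse.coeff k • (y : R) ^ k :=
        aeval_eq_sum_range' h1 _
    _ = ∑ k ∈ Finset.range (d + 1),
          (fun j => p.coeff j • ((y⁻¹ : Rˣ) : R) ^ j * (y : R) ^ d) (d + 1 - 1 - k) :=
        Finset.sum_congr rfl key
    _ = ∑ j ∈ Finset.range (d + 1),
          p.coeff j • ((y⁻¹ : Rˣ) : R) ^ j * (y : R) ^ d :=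
        by exact Finset.sum_range_reflect (fun j => p.coeff j • ((y⁻¹ : Rˣ) : R) ^ j * (y : R) ^ d) (d + 1)
    _ = (∑ j ∈ Finset.range (d + 1), p.coeff j • ((y⁻¹ : Rˣ) : R) ^ j) * (y : R) ^ d := by
        rw [Finset.sum_mul]
    _ = aeval ((y⁻¹ : Rˣ) : R) p * (y : R) ^ d := by
        rw [aeval_eq_sum_range' (lt_add_one d)]

lemma aux_conj {F R : Type*} [Field F] [Ring R] [Algebra F R] (u : Rˣ) (x : R) (p : F[X]) :
    aeval ((u : R) * x * ((u⁻¹ : Rˣ) : R)) p = (u : R) * aeval x p * ((u⁻¹ : Rˣ) : R) := by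
  rw [aeval_eq_sum_range, aeval_eq_sum_range, Finset.mul_sum, Finset.sum_mul]
  apply Finset.sum_congr rfl
  intro k _
  rw [Units.conj_pow, mul_smul_comm, smul_mul_assoc]

lemma aux_monic_eq {F : Type*} [Field F] {p q : F[X]} (hp : p.Monic) (hq : q.Monic)
    (h : p ∣ q) (hd : q.natDegree ≤ p.natDegree) : p = q := by
  obtain ⟨t, ht⟩ := h
  have ht0 : t ≠ 0 := by
    rintro rfl; rw [mul_zero] at ht; exact hq.ne_zero ht
  have hdeg : q.natDegree = p.natDegree + t.natDegree := by
    rw [ht, natDegree_mul hp.ne_zero ht0]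
  have htd : t.natDegree = 0 := by omega
  have hlc : t.leadingCoeff = 1 := by
    have := hq.leadingCoeff
    rw [ht, leadingCoeff_mul, hp.leadingCoeff, one_mul] at this
    exact this
  have : t = 1 := by
    rw [eq_C_of_natDegree_eq_zero htd]
    rw [Polynomial.leadingCoeff, htd] at hlc
    rw [hlc, map_one]
  rw [ht, this, mul_one]

lemma aux_cop {K : Type*} [Field K] {a b : K} (h : a ≠ b) :
    IsCoprime (X - C a) (X - C b) := by
  refine ⟨C (b - a)⁻¹, -(C (b - a)⁻¹), ?_⟩
  have h1 : C (b - a)⁻¹ * (X - C a) + -C (b - a)⁻¹ * (X - C b)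
      = C (b - a)⁻¹ * ((X - C a) - (X - C b)) := by ring
  rw [h1]
  have h2 : (X - C a) - (X - C b) = C (b - a) := by
    rw [sub_sub_sub_cancel_left, ← C_sub]
  rw [h2, ← C_mul, inv_mul_cancel₀ (sub_ne_zero.mpr (Ne.symm h)), C_1]

lemma aux_pow_restrict {F V : Type*} [Field F] [AddCommGroup V] [Module F V]
    (f : V →ₗ[F] V) (U : Submodule F V) (hU : ∀ x ∈ U, f x ∈ U) (k : ℕ) :
    ∀ x (hx : x ∈ U), (f ^ k) x = (((f.restrict hU) ^ k) ⟨x, hx⟩ : U) := by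
  induction k with
  | zero => intro x hx; simp
  | succ k ih =>
    intro x hx
    rw [pow_succ, pow_succ, Module.End.mul_apply, Module.End.mul_apply,
      LinearMap.restrict_apply]
    exact ih (f x) (hU x hx)

lemma aux_restrict {F V : Type*} [Field F] [AddCommGroup V] [Module F V]
    (f : V →ₗ[F] V) (U : Submodule F V) (hU : ∀ x ∈ U, f x ∈ U) (p : F[X])
    (x : V) (hx : x ∈ U) :
    Polynomial.aeval f p x = ((Polynomial.aeval (f.restrict hU) p) ⟨x, hx⟩ : U) := by
  induction p using Polynomial.induction_on' with
  | add p q hp hq =>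
    simp only [map_add, LinearMap.add_apply, hp, hq, Submodule.coe_add]
  | monomial n a =>
    simp only [aeval_monomial, Module.End.mul_apply, LinearMap.smul_apply,
      Module.algebraMap_end_apply, Submodule.coe_smul]
    congr 1
    exact aux_pow_restrict f U hU n x hx

lemma aux_root_ne_zero {F K : Type*} [Field F] [Field K] [Algebra F K] {m : F[X]}
    (h0 : m.coeff 0 ≠ 0) {z : K} (hz : aeval z m = 0) : z ≠ 0 := by
  rintro rfl
  rw [show (0 : K) = algebraMap F K 0 by simp,
    aeval_algebraMap_apply_eq_algebraMap_eval] at hz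
  have h1 : m.eval 0 = 0 := by
    apply (algebraMap F K).injective
    exact hz
  rw [← coeff_zero_eq_eval_zero] at h1
  exact h0 h1

lemma aux_inv_root {F K : Type*} [Field F] [Field K] [Algebra F K] {m : F[X]}
    (h0 : m.coeff 0 ≠ 0) (hrev : m.reverse = C (m.coeff 0) * m) {z : K}
    (hz : aeval z m = 0) : aeval z⁻¹ m = 0 := by
  have hz0 : z ≠ 0 := aux_root_ne_zero h0 hz
  have h1 := aux_rev (Units.mk0 z hz0) m
  simp only [Units.val_mk0, Units.val_inv_eq_inv_val] at h1
  rw [hrev, map_mul, aeval_C, hz, mul_zero] at h1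
  rcases mul_eq_zero.mp h1.symm with h | h
  · exact h
  · exact absurd h (pow_ne_zero _ hz0)

lemma aux_fix {F K : Type*} [Field F] [Fintype F] [Field K] [Algebra F K] {q : ℕ}
    (hq : Fintype.card F = q) {z : K} (hz : z ^ q = z) :
    ∃ a : F, z = algebraMap F K a := by
  subst hq
  classical
  have hq1 : 1 < Fintype.card F := Fintype.one_lt_card
  have hroots := FiniteField.roots_X_pow_card_sub_X F
  have hmon : (X ^ Fintype.card F - X : F[X]).Monic := by
    apply monic_X_pow_sub
    rw [degree_X]
    exact_mod_cast hq1
  have hdeg : (X ^ Fintype.card F - X : F[X]).natDegree = Fintype.card F :=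
    FiniteField.X_pow_card_sub_X_natDegree_eq F hq1
  have hcard : Multiset.card (X ^ Fintype.card F - X : F[X]).roots
      = (X ^ Fintype.card F - X : F[X]).natDegree := by
    rw [hroots, hdeg]
    simp [Finset.card_univ]
  have hprod := prod_multiset_X_sub_C_of_monic_of_roots_card_eq hmon hcard
  rw [hroots] at hprod
  have h2 : Polynomial.eval z
      (Polynomial.map (algebraMap F K) (X ^ Fintype.card F - X : F[X])) = 0 := by
    simp [hz]
  rw [← hprod, Polynomial.map_multiset_prod, Multiset.map_map] at h2
  rw [Polynomial.eval_multiset_prod, Multiset.map_map] at h2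
  rw [Multiset.prod_eq_zero_iff] at h2
  simp only [Multiset.mem_map, Function.comp_apply, Polynomial.map_sub, map_X, map_C,
    eval_sub, eval_X, eval_C] at h2
  obtain ⟨a, _, ha⟩ := h2
  exact ⟨a, by rwa [sub_eq_zero] at ha⟩

lemma aux_irred {F : Type*} [Field F] [Fintype F] {q : ℕ} (hq : Fintype.card F = q)
    (hodd : Odd q) {m r : F[X]} (hm : m.Monic) (h0 : m.coeff 0 ≠ 0)
    (hrev : m.reverse = C (m.coeff 0) * m) (hdeg : m.natDegree ≤ 3)
    (hr_irr : Irreducible r) (hr_mon : r.Monic) (hrdvd : r ∣ m)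
    (hdr : 2 ≤ r.natDegree) : m ∣ X ^ (q * (q + 1)) - 1 := by
  classical
  have hq3 : 3 ≤ q := by
    obtain ⟨t, ht⟩ := hodd
    have h2 : 1 < q := hq ▸ Fintype.one_lt_card
    omega
  have hr0 : r ≠ 0 := hr_mon.ne_zero
  have hm0 : m ≠ 0 := hm.ne_zero
  have hdr3 : r.natDegree ≤ 3 := (natDegree_le_of_dvd hrdvd hm0).trans hdeg
  haveI : Fact (Irreducible r) := ⟨hr_irr⟩
  set K := AdjoinRoot r with hK
  set ξ := AdjoinRoot.root r with hξ
  have hξr : aeval ξ r = 0 := by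
    rw [AdjoinRoot.aeval_eq, AdjoinRoot.mk_self]
  have hminr : ∀ z : K, aeval z r = 0 → minpoly F z = r := fun z hz =>
    (minpoly.eq_of_irreducible_of_monic hr_irr hz hr_mon).symm
  have hnotF : ∀ z : K, aeval z r = 0 → ∀ a : F, z ≠ algebraMap F K a := by
    intro z hz a he
    have h1 := hminr z hz
    rw [he, minpoly.eq_X_sub_C] at h1
    have := congrArg natDegree h1
    rw [natDegree_X_sub_C] at this
    omega
  -- Frobenius
  set p := ringChar F with hp
  haveI hPF : CharP F p := ringChar.charP F
  obtain ⟨k, hpp, hqk⟩ := FiniteField.card F p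
  rw [hq] at hqk
  haveI : Fact p.Prime := ⟨hpp⟩
  haveI : CharP K p := charP_of_injective_algebraMap (algebraMap F K).injective p
  haveI : ExpChar K p := ExpChar.prime hpp
  set φ : K →ₐ[F] K :=
    { toRingHom := iterateFrobenius K p (k : ℕ),
      commutes' := by
        intro a
        show iterateFrobenius K p (k : ℕ) (algebraMap F K a) = algebraMap F K a
        rw [iterateFrobenius_def, ← map_pow, ← hqk, ← hq, FiniteField.pow_card] } with hφdef
  have hφ : ∀ z : K, φ z = z ^ q := by
    intro z
    show iterateFrobenius K p (k : ℕ) z = z ^ q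
    rw [iterateFrobenius_def, ← hqk]
  have hfrob : ∀ z : K, aeval z r = 0 → aeval (z ^ q) r = 0 := by
    intro z hz
    rw [← hφ z, Polynomial.aeval_algHom_apply, hz, map_zero]
  -- roots and membership facts
  have hmeq : ∃ s : F[X], m = r * s := hrdvd
  obtain ⟨s, hms⟩ := hmeq
  have hs0 : s ≠ 0 := by rintro rfl; rw [mul_zero] at hms; exact hm0 hms
  have hs_mon : s.Monic := by
    have := hm.leadingCoeff
    rw [hms, leadingCoeff_mul, hr_mon.leadingCoeff, one_mul] at this
    exact this
  have hmdeg : m.natDegree = r.natDegree + s.natDegree := by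
    rw [hms, natDegree_mul hr0 hs0]
  have hξm : aeval ξ m = 0 := by rw [hms, map_mul, hξr, zero_mul]
  have hξ0 : ξ ≠ 0 := aux_root_ne_zero h0 hξm
  have hξinv : aeval ξ⁻¹ m = 0 := aux_inv_root h0 hrev hξm
  have hne1 : ξ ^ q ≠ ξ := by
    intro h
    obtain ⟨a, ha⟩ := aux_fix hq h
    exact hnotF ξ hξr a ha
  -- rK and its root factors
  set rK := r.map (algebraMap F K) with hrK
  have hrKmon : rK.Monic := hr_mon.map _
  have hrKdeg : rK.natDegree = r.natDegree := natDegree_map _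
  have haeval_eval : ∀ z : K, aeval z r = eval z rK := by
    intro z
    rw [hrK, eval_map, aeval_def]
  have hdvd1 : (X - C ξ) ∣ rK := dvd_iff_isRoot.mpr (by
    rw [IsRoot.def, ← haeval_eval]; exact hξr)
  have hdvd2 : (X - C (ξ ^ q)) ∣ rK := dvd_iff_isRoot.mpr (by
    rw [IsRoot.def, ← haeval_eval]; exact hfrob ξ hξr)
  -- ξ is not ±1 and ξ⁻¹ not in F
  have hnot_pm : ξ⁻¹ ≠ ξ := by
    intro h
    have hsq : ξ * ξ = 1 := by
      calc ξ * ξ = ξ * ξ⁻¹ := by rw [h]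
        _ = 1 := mul_inv_cancel₀ hξ0
    have : (ξ - 1) * (ξ + 1) = 0 := by ring_nf; linear_combination hsq
    rcases mul_eq_zero.mp this with h1 | h1
    · exact hnotF ξ hξr 1 (by rw [map_one]; exact sub_eq_zero.mp h1)
    · refine hnotF ξ hξr (-1) ?_
      rw [map_neg, map_one]
      have := eq_neg_of_add_eq_zero_left h1
      exact this
  have hdcase : r.natDegree = 2 ∨ r.natDegree = 3 := by omega
  rcases hdcase with hdr2 | hdr3'
  · -- quadratic case
    have hproddeg : ((X - C ξ) * (X - C (ξ ^ q))).natDegree = 2 := by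
      rw [natDegree_mul (X_sub_C_ne_zero ξ) (X_sub_C_ne_zero (ξ ^ q)),
        natDegree_X_sub_C, natDegree_X_sub_C]
    have h2 : (X - C ξ) * (X - C (ξ ^ q)) = rK :=
      aux_monic_eq ((monic_X_sub_C ξ).mul (monic_X_sub_C (ξ ^ q))) hrKmon
        ((aux_cop (Ne.symm hne1)).mul_dvd hdvd1 hdvd2)
        (by rw [hproddeg, hrKdeg, hdr2])
    have hsdeg : s.natDegree ≤ 1 := by omega
    have hs_one : s.natDegree = 0 → s = 1 := by
      intro hsd
      have hc := hs_mon.leadingCoeff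
      rw [eq_C_of_natDegree_eq_zero hsd]
      rw [Polynomial.leadingCoeff, hsd] at hc
      rw [hc, map_one]
    have hsplit2 : aeval ξ⁻¹ r * aeval ξ⁻¹ s = 0 := by
      rw [← map_mul, ← hms]; exact hξinv
    have hξq1 : ξ ^ (q + 1) = 1 := by
      rcases mul_eq_zero.mp hsplit2 with hcr | hcs
      · have heval0 : eval ξ⁻¹ ((X - C ξ) * (X - C (ξ ^ q))) = 0 := by
          rw [h2, ← haeval_eval]; exact hcr
        rw [eval_mul, eval_sub, eval_sub, eval_X, eval_C, eval_C] at heval0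
        rcases mul_eq_zero.mp heval0 with h1 | h1
        · exact absurd (sub_eq_zero.mp h1) hnot_pm
        · have hinv : ξ⁻¹ = ξ ^ q := sub_eq_zero.mp h1
          rw [pow_succ]
          calc ξ ^ q * ξ = ξ⁻¹ * ξ := by rw [← hinv]
            _ = 1 := inv_mul_cancel₀ hξ0
      · exfalso
        rcases Nat.le_one_iff_eq_zero_or_eq_one.mp hsdeg with hsd | hsd
        · rw [hs_one hsd, map_one] at hcs
          exact one_ne_zero hcs
        · have hsX : s = X + C (s.coeff 0) := hs_mon.eq_X_add_C hsd
          rw [hsX, map_add, aeval_X, aeval_C] at hcs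
          have hinv : ξ⁻¹ = algebraMap F K (-(s.coeff 0)) := by
            rw [map_neg]; exact eq_neg_of_add_eq_zero_left hcs
          have hxi : ξ = algebraMap F K (-(s.coeff 0))⁻¹ := by
            rw [map_inv₀, ← hinv, inv_inv]
          exact hnotF ξ hξr _ hxi
    have hrdvd1 : r ∣ (X ^ (q + 1) - 1 : F[X]) := by
      have ha : aeval ξ ((X : F[X]) ^ (q + 1) - 1) = 0 := by
        rw [map_sub, map_pow, aeval_X, map_one, hξq1, sub_self]
      have hd := minpoly.dvd F ξ ha
      rwa [hminr ξ hξr] at hd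
    have hsdvd1 : s ∣ (X ^ (q + 1) - 1 : F[X]) := by
      rcases Nat.le_one_iff_eq_zero_or_eq_one.mp hsdeg with hsd | hsd
      · rw [hs_one hsd]; exact one_dvd _
      · set a : F := -(s.coeff 0) with ha
        have hsX : s = X - C a := by
          rw [ha, map_neg, sub_neg_eq_add]
          exact hs_mon.eq_X_add_C hsd
        have haroot : eval a m = 0 := by
          rw [hms, eval_mul, hsX, eval_sub, eval_X, eval_C, sub_self, mul_zero]
        have ha0 : a ≠ 0 := by
          intro h
          rw [h, ← coeff_zero_eq_eval_zero] at haroot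
          exact h0 haroot
        have haev : aeval (a : F) m = 0 := by
          rwa [aeval_def, eval₂_eq_eval_map, Algebra.algebraMap_self, map_id]
        have hainv : aeval (a⁻¹ : F) m = 0 := aux_inv_root h0 hrev haev
        have hainv' : eval a⁻¹ m = 0 := by
          rwa [aeval_def, eval₂_eq_eval_map, Algebra.algebraMap_self, map_id] at hainv
        rw [hms, eval_mul] at hainv'
        have hrnot : eval a⁻¹ r ≠ 0 := by
          intro hz
          have hzz : aeval (algebraMap F K a⁻¹) r = 0 := by
            rw [aeval_algebraMap_apply_eq_algebraMap_eval, hz, map_zero]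
          exact hnotF _ hzz a⁻¹ rfl
        have hsroot : eval a⁻¹ s = 0 := by
          rcases mul_eq_zero.mp hainv' with h | h
          · exact absurd h hrnot
          · exact h
        rw [hsX, eval_sub, eval_X, eval_C, sub_eq_zero] at hsroot
        have haa : a * a = 1 := by
          calc a * a = a * a⁻¹ := by rw [hsroot]
            _ = 1 := mul_inv_cancel₀ ha0
        obtain ⟨t, ht⟩ := hodd
        have haq : a ^ (q + 1) = 1 := by
          have h21 : q + 1 = 2 * (t + 1) := by omega
          rw [h21, pow_mul, sq, haa, one_pow]
        rw [hsX]
        apply dvd_iff_isRoot.mpr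
        rw [IsRoot.def, eval_sub, eval_pow, eval_X, eval_one, haq, sub_self]
    have hcop_rs : IsCoprime r s := by
      rcases Nat.le_one_iff_eq_zero_or_eq_one.mp hsdeg with hsd | hsd
      · rw [hs_one hsd]; exact isCoprime_one_right
      · rw [hr_irr.coprime_iff_not_dvd]
        intro hcon
        have := natDegree_le_of_dvd hcon hs0
        omega
    have hmdvd : m ∣ (X ^ (q + 1) - 1 : F[X]) := by
      rw [hms]; exact hcop_rs.mul_dvd hrdvd1 hsdvd1
    have hfin : (X ^ (q + 1) - 1 : F[X]) ∣ X ^ (q * (q + 1)) - 1 := by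
      have h := sub_dvd_pow_sub_pow ((X : F[X]) ^ (q + 1)) 1 q
      rwa [one_pow, ← pow_mul, mul_comm (q + 1) q] at h
    exact hmdvd.trans hfin
  · exfalso
    have hsd0 : s.natDegree = 0 := by omega
    have hs1 : s = 1 := by
      have hc := hs_mon.leadingCoeff
      rw [eq_C_of_natDegree_eq_zero hsd0]
      rw [Polynomial.leadingCoeff, hsd0] at hc
      rw [hc, map_one]
    set pb := AdjoinRoot.powerBasis hr0 with hpb
    letI : Fintype K := Module.fintypeOfFintype pb.basis
    have hcardK : Fintype.card K = q ^ 3 := by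
      rw [Module.card_fintype pb.basis, hq, Fintype.card_fin]
      congr 1
    have hq3K : ξ ^ (q ^ 3) = ξ := by
      have h := FiniteField.pow_card ξ
      rwa [hcardK] at h
    have hr2 : aeval (ξ ^ q) r = 0 := hfrob ξ hξr
    have hr3 : aeval ((ξ ^ q) ^ q) r = 0 := hfrob _ hr2
    have hne2 : (ξ ^ q) ^ q ≠ ξ ^ q := by
      intro h
      obtain ⟨a, ha⟩ := aux_fix hq h
      exact hnotF _ hr2 a ha
    have hne3 : (ξ ^ q) ^ q ≠ ξ := by
      intro h
      have h1 : ((ξ ^ q) ^ q) ^ q = ξ ^ q := by rw [h]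
      have h6 : ((ξ ^ q) ^ q) ^ q = ξ ^ (q ^ 3) := by
        rw [← pow_mul, ← pow_mul]; congr 1; ring
      rw [h6, hq3K] at h1
      exact hne1 h1.symm
    have hdvd3 : (X - C ((ξ ^ q) ^ q)) ∣ rK := dvd_iff_isRoot.mpr (by
      rw [IsRoot.def, ← haeval_eval]; exact hr3)
    have hprod3mon : ((X - C ξ) * ((X - C (ξ ^ q)) * (X - C ((ξ ^ q) ^ q)))).Monic :=
      (monic_X_sub_C ξ).mul ((monic_X_sub_C _).mul (monic_X_sub_C _))
    have hprod3deg :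
        ((X - C ξ) * ((X - C (ξ ^ q)) * (X - C ((ξ ^ q) ^ q)))).natDegree = 3 := by
      rw [natDegree_mul (X_sub_C_ne_zero _)
          (mul_ne_zero (X_sub_C_ne_zero _) (X_sub_C_ne_zero _)),
        natDegree_mul (X_sub_C_ne_zero _) (X_sub_C_ne_zero _),
        natDegree_X_sub_C, natDegree_X_sub_C, natDegree_X_sub_C]
    have hcopbig : IsCoprime (X - C ξ) ((X - C (ξ ^ q)) * (X - C ((ξ ^ q) ^ q))) :=
      (aux_cop (Ne.symm hne1)).mul_right (aux_cop (Ne.symm hne3))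
    have h3 : (X - C ξ) * ((X - C (ξ ^ q)) * (X - C ((ξ ^ q) ^ q))) = rK :=
      aux_monic_eq hprod3mon hrKmon
        (hcopbig.mul_dvd hdvd1 ((aux_cop (Ne.symm hne2)).mul_dvd hdvd2 hdvd3))
        (by rw [hprod3deg, hrKdeg, hdr3'])
    have hcr : aeval ξ⁻¹ r = 0 := by
      have hx := hξinv
      rw [hms, hs1, mul_one] at hx
      exact hx
    have heval0 : eval ξ⁻¹ ((X - C ξ) * ((X - C (ξ ^ q)) * (X - C ((ξ ^ q) ^ q)))) = 0 := by
      rw [h3, ← haeval_eval]; exact hcr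
    simp only [eval_mul, eval_sub, eval_X, eval_C] at heval0
    have hfinal : ξ ^ q = ξ⁻¹ → False := by
      intro h
      apply hne3
      calc (ξ ^ q) ^ q = (ξ⁻¹) ^ q := by rw [h]
        _ = (ξ ^ q)⁻¹ := by rw [inv_pow]
        _ = (ξ⁻¹)⁻¹ := by rw [h]
        _ = ξ := inv_inv ξ
    rcases mul_eq_zero.mp heval0 with h1 | h1
    · exact hnot_pm (sub_eq_zero.mp h1)
    · rcases mul_eq_zero.mp h1 with hc2 | hc2
      · exact hfinal (sub_eq_zero.mp hc2).symm
      · have h4 : ξ⁻¹ = (ξ ^ q) ^ q := sub_eq_zero.mp hc2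
        have h5 : (ξ⁻¹) ^ q = ((ξ ^ q) ^ q) ^ q := by rw [h4]
        have h6 : ((ξ ^ q) ^ q) ^ q = ξ ^ (q ^ 3) := by
          rw [← pow_mul, ← pow_mul]; congr 1; ring
        rw [h6, hq3K, inv_pow] at h5
        have h7 : ξ ^ q = ξ⁻¹ := by rw [← inv_inv (ξ ^ q), h5]
        exact hfinal h7

lemma key_dvd {F : Type*} [Field F] [Fintype F] {q : ℕ} (hq : Fintype.card F = q)
    (hodd : Odd q) {m : F[X]} (hm : m.Monic) (h0 : m.coeff 0 ≠ 0)
    (hrev : m.reverse = C (m.coeff 0) * m) (hdeg : m.natDegree ≤ 3) :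
    m ∣ (X : F[X]) ^ (q * (q + 1)) - 1 ∨ m ∣ (X : F[X]) ^ (q * (q - 1)) - 1 := by
  classical
  have hm0 : m ≠ 0 := hm.ne_zero
  have hq3 : 3 ≤ q := by
    obtain ⟨t, ht⟩ := hodd
    have h2 : 1 < q := hq ▸ Fintype.one_lt_card
    omega
  by_cases hsplit : Splits m
  · right
    have hprodm := hsplit.eq_prod_roots_of_monic hm
    have hcard : Multiset.card m.roots = m.natDegree :=
      splits_iff_card_roots.mp hsplit
    have hXdvd : ∀ a ∈ m.roots, (X - C a) ∣ (X ^ (q - 1) - 1 : F[X]) := by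
      intro a ha
      have hroot : IsRoot m a := (mem_roots hm0).mp ha
      have ha0 : a ≠ 0 := by
        intro h
        rw [h] at hroot
        rw [IsRoot.def, ← coeff_zero_eq_eval_zero] at hroot
        exact h0 hroot
      have haq : a ^ (q - 1) = 1 := by
        have := FiniteField.pow_card_sub_one_eq_one a ha0
        rwa [hq] at this
      apply dvd_iff_isRoot.mpr
      rw [IsRoot.def, eval_sub, eval_pow, eval_X, eval_one, haq, sub_self]
    have hproddvd : ∀ s : Multiset F, (∀ a ∈ s, (X - C a) ∣ (X ^ (q - 1) - 1 : F[X])) →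
        (s.map fun a => X - C a).prod ∣ ((X ^ (q - 1) - 1 : F[X])) ^ Multiset.card s := by
      intro s
      induction s using Multiset.induction_on with
      | empty => intro _; simp
      | cons a s ih =>
        intro hs
        rw [Multiset.map_cons, Multiset.prod_cons, Multiset.card_cons, pow_succ']
        exact mul_dvd_mul (hs a (Multiset.mem_cons_self a s))
          (ih fun b hb => hs b (Multiset.mem_cons_of_mem hb))
    have h1 : m ∣ ((X ^ (q - 1) - 1 : F[X])) ^ m.natDegree := by
      have hpd := hproddvd m.roots hXdvd
      rw [hcard] at hpd
      rw [← hprodm] at hpd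
      exact hpd
    have h2 : ((X ^ (q - 1) - 1 : F[X])) ^ m.natDegree ∣ ((X ^ (q - 1) - 1 : F[X])) ^ q :=
      pow_dvd_pow _ (by omega)
    have h3 : ((X ^ (q - 1) - 1 : F[X])) ^ q = X ^ (q * (q - 1)) - 1 := by
      set p := ringChar F with hp
      haveI hPF : CharP F p := ringChar.charP F
      obtain ⟨k, hpp, hqk⟩ := FiniteField.card F p
      rw [hq] at hqk
      haveI : Fact p.Prime := ⟨hpp⟩
      rw [hqk, sub_pow_char_pow, one_pow, ← pow_mul, ← hqk, mul_comm (q - 1) q]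
    exact h1.trans (h3 ▸ h2)
  · left
    have hex : ∃ g : F[X], Irreducible g ∧ g ∣ m ∧ degree g ≠ 1 := by
      by_contra hc
      push_neg at hc
      apply hsplit
      apply splits_iff_splits.mpr
      right
      intro g hg hgdvd
      exact hc g hg hgdvd
    obtain ⟨g, hg_irr, hg_dvd, hg_deg⟩ := hex
    have hg0 : g ≠ 0 := hg_irr.ne_zero
    set r := g * C g.leadingCoeff⁻¹ with hr
    have hr_mon : r.Monic := monic_mul_leadingCoeff_inv hg0
    have hassoc : Associated g r := by
      apply associated_mul_unit_right
      exact isUnit_C.mpr (IsUnit.mk0 _ (inv_ne_zero (leadingCoeff_ne_zero.mpr hg0)))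
    have hr_irr : Irreducible r := hassoc.irreducible hg_irr
    have hr_dvd : r ∣ m := (hassoc.symm.dvd).trans hg_dvd
    have hr_deg : degree r = degree g := degree_mul_leadingCoeff_inv g hg0
    have hr0 : r ≠ 0 := hr_mon.ne_zero
    have hdr : 2 ≤ r.natDegree := by
      have hdnn : degree r = (r.natDegree : WithBot ℕ) := degree_eq_natDegree hr0
      have hne0 : r.natDegree ≠ 0 := by
        intro h
        apply hr_irr.not_isUnit
        apply isUnit_iff_degree_eq_zero.mpr
        rw [hdnn, h]; rfl
      have hne1 : r.natDegree ≠ 1 := by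
        intro h
        apply hg_deg
        rw [← hr_deg, hdnn, h]; rfl
      omega
    exact aux_irred hq hodd hm h0 hrev hdeg hr_irr hr_mon hr_dvd hdr

theorem stmt10 (F : Type*) [Field F] [Fintype F] (q n : ℕ)
    (hq : Fintype.card F = q) (hodd : Odd q) (hn : 1 ≤ n)
    (V : Type*) [AddCommGroup V] [Module F V] [FiniteDimensional F V]
    (hdim : Module.finrank F V = 2 * n + 1)
    (i j : (V →ₗ[F] V)ˣ) (hi : i * i = 1) (hj : j * j = 1)
    (hVi : Module.finrank F (Module.End.eigenspace (i : V →ₗ[F] V) (-1)) = 2 * n)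
    (hVj : Module.finrank F (Module.End.eigenspace (j : V →ₗ[F] V) (-1)) = 2 * n) :
    (∃ W : Submodule F V, Module.finrank F V - Module.finrank F W ≤ 2 ∧
        ∀ v ∈ W, ((i * j : (V →ₗ[F] V)ˣ) : V →ₗ[F] V) v = v) ∧
      (orderOf (i * j) ∣ q * (q + 1) ∨ orderOf (i * j) ∣ q * (q - 1)) := by
  classical
  have hEi := Module.End.eigenspace ((i : V →ₗ[F] V)) (-1 : F)
  set W : Submodule F V := Module.End.eigenspace ((i : V →ₗ[F] V)) (-1)
      ⊓ Module.End.eigenspace ((j : V →ₗ[F] V)) (-1) with hW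
  have hWrank : 2 * n - 1 ≤ Module.finrank F W := by
    have hsum := Submodule.finrank_sup_add_finrank_inf_eq
      (Module.End.eigenspace ((i : V →ₗ[F] V)) (-1))
      (Module.End.eigenspace ((j : V →ₗ[F] V)) (-1))
    have hsup := Submodule.finrank_le (Module.End.eigenspace ((i : V →ₗ[F] V)) (-1)
      ⊔ Module.End.eigenspace ((j : V →ₗ[F] V)) (-1))
    rw [hVi, hVj] at hsum
    rw [hdim] at hsup
    rw [← hW] at hsum
    omega
  have hfix : ∀ v ∈ W, ((i * j : (V →ₗ[F] V)ˣ) : V →ₗ[F] V) v = v := by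
    intro v hv
    rw [hW, Submodule.mem_inf] at hv
    have hvi : (i : V →ₗ[F] V) v = -v := by
      have h := (Module.End.mem_eigenspace_iff).mp hv.1
      rwa [neg_smul, one_smul] at h
    have hvj : (j : V →ₗ[F] V) v = -v := by
      have h := (Module.End.mem_eigenspace_iff).mp hv.2
      rwa [neg_smul, one_smul] at h
    rw [Units.val_mul, Module.End.mul_apply, hvj, map_neg, hvi, neg_neg]
  refine ⟨⟨W, by rw [hdim]; omega, hfix⟩, ?_⟩
  -- Part 2
  set u := i * j with hu
  set gE : V →ₗ[F] V := ((u : (V →ₗ[F] V)ˣ) : V →ₗ[F] V) with hgE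
  set N1 : V →ₗ[F] V := gE - 1 with hN1
  have hker : W ≤ LinearMap.ker N1 := by
    intro v hv
    rw [LinearMap.mem_ker, hN1, LinearMap.sub_apply, Module.End.one_apply]
    rw [hgE]
    rw [hfix v hv, sub_self]
  have hUrank : Module.finrank F (LinearMap.range N1) ≤ 2 := by
    have h1 := LinearMap.finrank_range_add_finrank_ker N1
    have h2 : Module.finrank F W ≤ Module.finrank F (LinearMap.ker N1) :=
      Submodule.finrank_mono hker
    rw [hdim] at h1
    omega
  have hUinv : ∀ x ∈ LinearMap.range N1, gE x ∈ LinearMap.range N1 := by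
    rintro x ⟨v, rfl⟩
    exact ⟨gE v, by simp [hN1, LinearMap.sub_apply, Module.End.one_apply, map_sub]⟩
  set e := gE.restrict hUinv with he
  have hcay : Polynomial.aeval e e.charpoly = 0 := LinearMap.aeval_self_charpoly e
  have hedeg : e.charpoly.natDegree = Module.finrank F (LinearMap.range N1) :=
    LinearMap.charpoly_natDegree e
  have hXone : ((X : F[X]) - 1) = X - C 1 := by rw [map_one]
  have hann : Polynomial.aeval gE (e.charpoly * (X - 1)) = 0 := by
    apply LinearMap.ext
    intro v
    rw [map_mul, Module.End.mul_apply]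
    have hx1 : (Polynomial.aeval gE (X - 1 : F[X])) v = N1 v := by
      rw [map_sub, aeval_X, map_one, hN1]
    rw [hx1]
    have hmem : N1 v ∈ LinearMap.range N1 := ⟨v, rfl⟩
    rw [aux_restrict gE (LinearMap.range N1) hUinv _ _ hmem, ← he, hcay]
    simp
  have hInt : IsIntegral F gE := LinearMap.isIntegral gE
  have hm_mon : (minpoly F gE).Monic := minpoly.monic hInt
  have hmne : minpoly F gE ≠ 0 := minpoly.ne_zero hInt
  have haev : Polynomial.aeval gE (minpoly F gE) = 0 := minpoly.aeval F gE
  have hmdvd : minpoly F gE ∣ e.charpoly * (X - 1) := minpoly.dvd F gE hann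
  have hdeg3 : (minpoly F gE).natDegree ≤ 3 := by
    have hcne : e.charpoly ≠ 0 := (LinearMap.charpoly_monic e).ne_zero
    have hxne : ((X : F[X]) - 1) ≠ 0 := by rw [hXone]; exact X_sub_C_ne_zero 1
    have hle := natDegree_le_of_dvd hmdvd (mul_ne_zero hcne hxne)
    rw [natDegree_mul hcne hxne, hXone, natDegree_X_sub_C] at hle
    omega
  have hi_inv : i⁻¹ = i := inv_eq_of_mul_eq_one_right hi
  have hj_inv : j⁻¹ = j := inv_eq_of_mul_eq_one_right hj
  have huinv : u⁻¹ = i * u * i⁻¹ := by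
    have h1 : u⁻¹ = j * i := by
      apply inv_eq_of_mul_eq_one_right
      rw [hu, mul_assoc, ← mul_assoc j j i, hj, one_mul, hi]
    rw [h1, hi_inv, hu, ← mul_assoc i i j, hi, one_mul]
  have haev_inv : Polynomial.aeval ((u⁻¹ : (V →ₗ[F] V)ˣ) : V →ₗ[F] V) (minpoly F gE) = 0 := by
    have hco : ((u⁻¹ : (V →ₗ[F] V)ˣ) : V →ₗ[F] V)
        = ((i : (V →ₗ[F] V)ˣ) : V →ₗ[F] V) * gE * ((i⁻¹ : (V →ₗ[F] V)ˣ) : V →ₗ[F] V) := by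
      rw [huinv, Units.val_mul, Units.val_mul, hgE]
    rw [hco, aux_conj i gE (minpoly F gE), haev, mul_zero, zero_mul]
  have h0 : (minpoly F gE).coeff 0 ≠ 0 := by
    intro hcz
    obtain ⟨t, ht⟩ := X_dvd_iff.mpr hcz
    have h1 : Polynomial.aeval gE (X * t) = 0 := by rw [← ht]; exact haev
    rw [map_mul, aeval_X] at h1
    have hone : ((u⁻¹ : (V →ₗ[F] V)ˣ) : V →ₗ[F] V) * gE = 1 := by
      rw [hgE, ← Units.val_mul, inv_mul_cancel, Units.val_one]
    have h2 : Polynomial.aeval gE t = 0 := by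
      have h3 := congrArg (fun z => ((u⁻¹ : (V →ₗ[F] V)ˣ) : V →ₗ[F] V) * z) h1
      simp only [← mul_assoc, hone, one_mul, mul_zero] at h3
      exact h3
    have ht0 : t ≠ 0 := by
      rintro rfl
      rw [mul_zero] at ht
      exact hmne ht
    have h4 := natDegree_le_of_dvd (minpoly.dvd F gE h2) ht0
    have h5 : (minpoly F gE).natDegree = 1 + t.natDegree := by
      rw [ht, natDegree_mul X_ne_zero ht0, natDegree_X]
    omega
  have hrev : (minpoly F gE).reverse = C ((minpoly F gE).coeff 0) * minpoly F gE := by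
    have hrev0 : Polynomial.aeval gE (minpoly F gE).reverse = 0 := by
      have h1 := aux_rev u (minpoly F gE)
      rw [← hgE] at h1
      rw [h1, haev_inv, zero_mul]
    have hdvdrev : minpoly F gE ∣ (minpoly F gE).reverse := minpoly.dvd F gE hrev0
    have hrev_ne : (minpoly F gE).reverse ≠ 0 := by
      intro h
      rw [Polynomial.reverse_eq_zero] at h
      exact hmne h
    have htd : (minpoly F gE).natTrailingDegree = 0 := by
      rw [Polynomial.natTrailingDegree_eq_zero]
      right; exact h0
    have hdrev : (minpoly F gE).reverse.natDegree = (minpoly F gE).natDegree := by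
      rw [Polynomial.reverse_natDegree, htd, Nat.sub_zero]
    obtain ⟨t, ht⟩ := hdvdrev
    have ht0 : t ≠ 0 := by
      rintro rfl
      rw [mul_zero] at ht
      exact hrev_ne ht
    have htdeg : t.natDegree = 0 := by
      have hh := congrArg natDegree ht
      rw [hdrev, natDegree_mul hmne ht0] at hh
      omega
    have htC : t = C (t.coeff 0) := eq_C_of_natDegree_eq_zero htdeg
    have hlc : (minpoly F gE).reverse.leadingCoeff = t.coeff 0 := by
      rw [ht, leadingCoeff_mul, hm_mon.leadingCoeff, one_mul, htC, leadingCoeff_C, coeff_C_zero]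
    have hlc2 : (minpoly F gE).reverse.leadingCoeff = (minpoly F gE).coeff 0 := by
      rw [Polynomial.reverse_leadingCoeff, Polynomial.trailingCoeff, htd]
    have hteq : t = C ((minpoly F gE).coeff 0) := by rw [htC, ← hlc2, hlc]
    rw [ht, hteq, mul_comm]
  have hfinal := key_dvd hq hodd hm_mon h0 hrev hdeg3
  have hpow : ∀ N : ℕ, (minpoly F gE ∣ (X : F[X]) ^ N - 1) → orderOf u ∣ N := by
    intro N hdvdN
    apply orderOf_dvd_of_pow_eq_one
    obtain ⟨c, hc⟩ := hdvdN
    have h1 : Polynomial.aeval gE ((X : F[X]) ^ N - 1) = 0 := by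
      rw [hc, map_mul, haev, zero_mul]
    rw [map_sub, map_pow, aeval_X, map_one, sub_eq_zero] at h1
    apply Units.ext
    rw [Units.val_pow_eq_pow_val, Units.val_one, ← hgE]
    exact h1
  rcases hfinal with h | h
  · exact Or.inl (hpow _ h)
  · exact Or.inr (hpow _ h)
end
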